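/- Let k ≥ 2 be an integer and n ≥ 1. If H_{k,n} and L_{k,n} are formed with t_1 = 2 and t_j = 1 for 2 ≤ j ≤ k, then per(H_{k,n}) = p^k_{k,n+1} and per(L_{k,n}) = p^k_{k,n+1}. -/

import Mathlib

open Finset
open Equiv

set_option linter.unusedSectionVars false

theorem permanent_succ_column_zero {n : ℕ} (A : Matrix (Fin (n+1)) (Fin (n+1)) ℂ) :
    A.permanent = ∑ i : Fin (n+1), A i 0 * (A.submatrix i.succAbove Fin.succ).permanent := by
  rw [Matrix.permanent, Finset.univ_perm_fin_succ, ← Finset.univ_product_univ]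
  simp only [Finset.sum_map, Equiv.toEmbedding_apply, Finset.sum_product]
  refine Finset.sum_congr rfl fun i _ => Fin.cases ?_ (fun i => ?_) i
  · simp only [Fin.prod_univ_succ, Matrix.permanent, Finset.mul_sum,
      Equiv.Perm.decomposeFin_symm_apply_zero, Equiv.swap_self,
      Equiv.Perm.decomposeFin_symm_apply_succ, Fin.succAbove_zero,
      Equiv.coe_refl, id, Matrix.submatrix_apply]
  · rw [Matrix.permanent, Finset.mul_sum]
    refine Fintype.sum_equiv (Equiv.mulLeft i.cycleRange) _ _ fun σ => ?_
    simp only [Fin.prod_univ_succ, Equiv.Perm.decomposeFin_symm_apply_zero,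
      Equiv.Perm.decomposeFin_symm_apply_succ, Matrix.submatrix_apply,
      Equiv.coe_mulLeft, Equiv.Perm.mul_apply, Fin.succAbove_cycleRange]

theorem permanent_succ_row_zero {n : ℕ} (A : Matrix (Fin (n+1)) (Fin (n+1)) ℂ) :
    A.permanent = ∑ j : Fin (n+1), A 0 j * (A.submatrix Fin.succ j.succAbove).permanent := by
  rw [← Matrix.permanent_transpose A, permanent_succ_column_zero]
  refine Finset.sum_congr rfl fun i _ => ?_
  rw [← Matrix.permanent_transpose (A.submatrix Fin.succ i.succAbove)]
  simp [Matrix.transpose_submatrix]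

noncomputable def eEnt (k : ℕ) (ε : ℂ) (r s : ℕ) : ℂ :=
  if -1 ≤ (r:ℤ) - s ∧ (r:ℤ) - s < k then ε ^ ((r:ℤ) - s) * (if (r:ℤ) - s = 0 then 2 else 1)
  else 0

noncomputable def HM (k : ℕ) (ε : ℂ) (m : ℕ) : Matrix (Fin m) (Fin m) ℂ :=
  Matrix.of fun i j => eEnt k ε (i.1+1) (j.1+1)

noncomputable def BM (k : ℕ) (ε : ℂ) (d m : ℕ) : Matrix (Fin m) (Fin m) ℂ :=
  Matrix.of fun i j => if j.1 = 0 then eEnt k ε (i.1+1+d) 1 else eEnt k ε (i.1+1) (j.1+1)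

theorem eEnt_shift (k : ℕ) (ε : ℂ) (r s : ℕ) : eEnt k ε (r+1) (s+1) = eEnt k ε r s := by
  have h : ((r+1:ℕ):ℤ) - ((s+1:ℕ):ℤ) = (r:ℤ) - s := by push_cast; ring
  rw [eEnt, eEnt, h]

theorem eEnt_diag (k : ℕ) (hk : 2 ≤ k) (ε : ℂ) : eEnt k ε 1 1 = 2 := by
  have h : (0:ℤ) < k := by exact_mod_cast Nat.lt_of_lt_of_le Nat.zero_lt_two hk
  norm_num [eEnt, h]
  omega

theorem eEnt_super (k : ℕ) (ε : ℂ) : eEnt k ε 1 2 = ε⁻¹ := by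
  have h : ((1:ℕ):ℤ) - ((2:ℕ):ℤ) = -1 := by norm_num
  have h2 : (-1:ℤ) < k := by omega
  rw [eEnt, h]
  norm_num [h2, zpow_neg_one]

theorem eEnt_row1_zero (k : ℕ) (ε : ℂ) (j : ℕ) (hj : 3 ≤ j) : eEnt k ε 1 j = 0 := by
  rw [eEnt, if_neg]
  rintro ⟨h1, -⟩
  omega

theorem eEnt_sub (k : ℕ) (ε : ℂ) (d : ℕ) :
    eEnt k ε (2+d) 1 = if d+2 ≤ k then ε^(d+1) else 0 := by
  have h : ((2+d:ℕ):ℤ) - ((1:ℕ):ℤ) = (d:ℤ)+1 := by push_cast; ring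
  rw [eEnt, h]
  by_cases hc : d+2 ≤ k
  · rw [if_pos, if_pos hc, if_neg (by omega), ← zpow_natCast]
    · push_cast; ring_nf
    · constructor <;> [omega; exact_mod_cast (by omega : (d:ℤ)+1 < (k:ℤ))]
  · rw [if_neg, if_neg hc]
    rintro ⟨-, h2⟩
    have : ((d:ℤ)+1) < k := h2
    omega

theorem succAbove_one_val {m : ℕ} (j : Fin (m+1)) :
    (((1 : Fin (m+2))).succAbove j).1 = if j.1 = 0 then 0 else j.1+1 := by
  rw [Fin.succAbove]
  rcases eq_or_ne j.1 0 with h | h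
  · rw [if_pos (by simp [Fin.lt_def, h]), if_pos h]
    simpa using h
  · rw [if_neg (by rw [Fin.lt_def, Fin.coe_castSucc, Fin.val_one]; omega), if_neg h]
    simp

section minors
variable (k : ℕ) (ε : ℂ)

theorem HM_minor0 (m : ℕ) :
    (HM k ε (m+1)).submatrix Fin.succ ((0 : Fin (m+1)).succAbove) = HM k ε m := by
  ext i j
  simp only [Matrix.submatrix_apply, Fin.succAbove_zero, HM, Matrix.of_apply, Fin.val_succ]
  exact eEnt_shift k ε (i.1+1) (j.1+1)

theorem HM_minor1 (m : ℕ) :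
    (HM k ε (m+2)).submatrix Fin.succ ((1 : Fin (m+2)).succAbove) = BM k ε 1 (m+1) := by
  ext i j
  simp only [Matrix.submatrix_apply, HM, BM, Matrix.of_apply, Fin.val_succ, succAbove_one_val]
  rcases eq_or_ne j.1 0 with h | h
  · rw [if_pos h, if_pos h]
  · rw [if_neg h, if_neg h]
    exact eEnt_shift k ε (i.1+1) (j.1+1)

theorem BM_minor0 (d m : ℕ) :
    (BM k ε d (m+1)).submatrix Fin.succ ((0 : Fin (m+1)).succAbove) = HM k ε m := by
  ext i j
  simp only [Matrix.submatrix_apply, Fin.succAbove_zero, HM, BM, Matrix.of_apply, Fin.val_succ,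
    if_neg (Nat.succ_ne_zero j.1)]
  exact eEnt_shift k ε (i.1+1) (j.1+1)

theorem BM_minor1 (d m : ℕ) :
    (BM k ε d (m+2)).submatrix Fin.succ ((1 : Fin (m+2)).succAbove) = BM k ε (d+1) (m+1) := by
  ext i j
  simp only [Matrix.submatrix_apply, BM, Matrix.of_apply, Fin.val_succ, succAbove_one_val]
  rcases eq_or_ne j.1 0 with h | h
  · rw [if_pos h, if_pos h, show i.1+1+1+d = i.1+1+(d+1) by omega, if_pos rfl]
  · rw [if_neg h, if_neg h]
    exact eEnt_shift k ε (i.1+1) (j.1+1)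

theorem permHM_succ (hk : 2 ≤ k) (m : ℕ) :
    (HM k ε (m+2)).permanent
      = 2 * (HM k ε (m+1)).permanent + ε⁻¹ * (BM k ε 1 (m+1)).permanent := by
  rw [permanent_succ_row_zero, Fin.sum_univ_succ, Fin.sum_univ_succ, Fin.succ_zero_eq_one,
    HM_minor0, HM_minor1]
  have h0 : (HM k ε (m+2)) 0 0 = 2 := eEnt_diag k hk ε
  have h1 : (HM k ε (m+2)) 0 1 = ε⁻¹ := by
    have : ((1 : Fin (m+2))).1 = 1 := rfl
    simp only [HM, Matrix.of_apply, Fin.val_zero, this]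
    exact eEnt_super k ε
  rw [h0, h1]
  have hz : ∀ j : Fin m, (HM k ε (m+2)) 0 j.succ.succ = 0 := fun j => by
    simp only [HM, Matrix.of_apply, Fin.val_zero, Fin.val_succ]
    exact eEnt_row1_zero k ε _ (by omega)
  rw [Finset.sum_eq_zero fun j _ => by rw [hz j, zero_mul]]
  ring

theorem permBM_succ (d m : ℕ) :
    (BM k ε d (m+2)).permanent
      = eEnt k ε (1+d) 1 * (HM k ε (m+1)).permanent
        + ε⁻¹ * (BM k ε (d+1) (m+1)).permanent := by
  rw [permanent_succ_row_zero, Fin.sum_univ_succ, Fin.sum_univ_succ, Fin.succ_zero_eq_one,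
    BM_minor0, BM_minor1]
  have h0 : (BM k ε d (m+2)) 0 0 = eEnt k ε (1+d) 1 := by
    simp only [BM, Matrix.of_apply, Fin.val_zero, if_pos rfl]
    norm_num [Nat.add_comm]
  have h1 : (BM k ε d (m+2)) 0 1 = ε⁻¹ := by
    have : ((1 : Fin (m+2))).1 = 1 := rfl
    simp only [BM, Matrix.of_apply, Fin.val_zero, this, if_neg one_ne_zero]
    exact eEnt_super k ε
  rw [h0, h1]
  have hz : ∀ j : Fin m, (BM k ε d (m+2)) 0 j.succ.succ = 0 := fun j => by
    simp only [BM, Matrix.of_apply, Fin.val_zero, Fin.val_succ,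
      if_neg (Nat.succ_ne_zero (j.1+1))]
    exact eEnt_row1_zero k ε _ (by omega)
  rw [Finset.sum_eq_zero fun j _ => by rw [hz j, zero_mul]]
  ring

theorem permHM_one (hk : 2 ≤ k) : (HM k ε 1).permanent = 2 := by
  rw [Matrix.permanent_unique]
  exact eEnt_diag k hk ε

theorem permBM_one (d : ℕ) : (BM k ε d 1).permanent = eEnt k ε (1+d) 1 := by
  rw [Matrix.permanent_unique]
  show (if ((default : Fin 1)).1 = 0 then eEnt k ε (((default : Fin 1)).1+1+d) 1
    else eEnt k ε (((default : Fin 1)).1+1) (((default : Fin 1)).1+1)) = eEnt k ε (1+d) 1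
  have hd : ((default : Fin 1)).1 = 0 := rfl
  rw [hd, if_pos rfl]

end minors

section pfacts
variable (k : ℕ) (hk : 2 ≤ k) (p : ℤ → ℂ)
  (hpinit : p (1 - (k:ℤ)) = 1)
  (hpzero : ∀ n : ℤ, 1 - (k:ℤ) < n → n ≤ 0 → p n = 0)
  (hprec : ∀ n : ℤ, 0 < n →
      p n = 2 * p (n - 1) + ∑ j ∈ Finset.Icc (2:ℤ) (k:ℤ), p (n - j))

include hk hpinit hpzero hprec

theorem p_one : p 1 = 1 := by
  have h := hprec 1 one_pos
  have h0 : p 0 = 0 := hpzero 0 (by omega) le_rfl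
  have hsum : ∑ j ∈ Finset.Icc (2:ℤ) (k:ℤ), p (1 - j) = 1 := by
    rw [Finset.sum_eq_single (k:ℤ)]
    · exact hpinit
    · intro c hc hne
      rw [Finset.mem_Icc] at hc
      exact hpzero _ (by omega) (by omega)
    · intro hnk
      exact absurd (Finset.mem_Icc.mpr ⟨by exact_mod_cast hk, le_rfl⟩) hnk
  rw [h, show (1:ℤ)-1 = 0 by ring, h0, hsum]
  ring

theorem p_two : p 2 = 2 := by
  have h := hprec 2 (by norm_num)
  have hsum : ∑ j ∈ Finset.Icc (2:ℤ) (k:ℤ), p (2 - j) = 0 :=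
    Finset.sum_eq_zero fun c hc => by
      rw [Finset.mem_Icc] at hc
      exact hpzero _ (by omega) (by omega)
  rw [h, show (2:ℤ)-1 = 1 by ring, p_one k hk p hpinit hpzero hprec, hsum]
  norm_num

theorem grec (mm : ℕ) :
    p ((mm:ℤ)+3) = 2 * p ((mm:ℤ)+2)
      + ∑ j ∈ Finset.range (mm+1), (if j+2 ≤ k then p ((mm:ℤ)-(j:ℤ)+1) else 0) := by
  have h := hprec ((mm:ℤ)+3) (by omega)
  have h1 : (mm:ℤ)+3-1 = (mm:ℤ)+2 := by ring
  rw [h, h1]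
  congr 1
  have step1 : ∑ c ∈ Finset.Icc (2:ℤ) (k:ℤ), p ((mm:ℤ)+3-c)
      = ∑ c ∈ (Finset.Icc (2:ℤ) (k:ℤ)).filter (· ≤ (mm:ℤ)+2), p ((mm:ℤ)+3-c) := by
    rw [Finset.sum_filter]
    refine Finset.sum_congr rfl fun c hc => ?_
    rw [Finset.mem_Icc] at hc
    by_cases hle : c ≤ (mm:ℤ)+2
    · rw [if_pos hle]
    · rw [if_neg hle]
      exact hpzero _ (by omega) (by omega)
  rw [step1, ← Finset.sum_filter]
  refine Finset.sum_bij' (fun c _ => (c-2).toNat) (fun j _ => (j:ℤ)+2) ?_ ?_ ?_ ?_ ?_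
  · intro c hc
    simp only [Finset.mem_filter, Finset.mem_Icc] at hc
    simp only [Finset.mem_filter, Finset.mem_range]
    omega
  · intro j hj
    simp only [Finset.mem_filter, Finset.mem_range] at hj
    simp only [Finset.mem_filter, Finset.mem_Icc]
    omega
  · intro c hc
    simp only [Finset.mem_filter, Finset.mem_Icc] at hc
    beta_reduce
    omega
  · intro j hj
    beta_reduce
    omega
  · intro c hc
    simp only [Finset.mem_filter, Finset.mem_Icc] at hc
    beta_reduce
    congr 1
    omega
theorem solve (ε : ℂ) (hε : ε ≠ 0) : ∀ m : ℕ,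
    (HM k ε (m+1)).permanent = p ((m:ℤ)+2) ∧
    ∀ d : ℕ, (BM k ε (d+1) (m+1)).permanent
      = ε^(d+1) * ∑ j ∈ Finset.range (m+1), (if d+j+2 ≤ k then p ((m:ℤ)-(j:ℤ)+1) else 0) := by
  intro m
  induction m with
  | zero =>
    constructor
    · rw [permHM_one k ε hk]
      exact (p_two k hk p hpinit hpzero hprec).symm
    · intro d
      rw [permBM_one, show 1+(d+1) = 2+d from by omega, eEnt_sub, Finset.sum_range_one,
        show ((0:ℕ):ℤ) = 0 from rfl, show ((0:ℤ))-0+1 = 1 by ring, p_one k hk p hpinit hpzero hprec,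
        show d+0+2 = d+2 from by omega]
      split_ifs <;> simp
  | succ m ih =>
    obtain ⟨ihP, ihQ⟩ := ih
    have hQ : ∀ d : ℕ, (BM k ε (d+1) (m+2)).permanent
        = ε^(d+1) * ∑ j ∈ Finset.range (m+2),
            (if d+j+2 ≤ k then p (((m+1:ℕ):ℤ)-(j:ℤ)+1) else 0) := by
      intro d
      rw [permBM_succ, ihP, ihQ (d+1), show 1+(d+1) = 2+d from by omega, eEnt_sub]
      have hsm : ∑ j ∈ Finset.range (m+2), (if d+j+2 ≤ k then p (((m+1:ℕ):ℤ)-(j:ℤ)+1) else 0)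
          = (∑ j ∈ Finset.range (m+1), (if d+(j+1)+2 ≤ k then p (((m+1:ℕ):ℤ)-((j+1:ℕ):ℤ)+1) else 0))
            + (if d+0+2 ≤ k then p (((m+1:ℕ):ℤ)-((0:ℕ):ℤ)+1) else 0) := by
      -- sum_range_succ'
        exact Finset.sum_range_succ' _ (m+1)
      rw [hsm]
      have e1 : ∀ j : ℕ, (((m+1:ℕ):ℤ)-((j+1:ℕ):ℤ)+1) = (m:ℤ)-(j:ℤ)+1 := by intro j; push_cast; ring
      have e2 : (((m+1:ℕ):ℤ)-((0:ℕ):ℤ)+1) = (m:ℤ)+2 := by push_cast; ring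
      have e3 : ε⁻¹ * ε^(d+1+1) = ε^(d+1) := by
        rw [pow_succ, mul_comm (ε^(d+1)) ε, ← mul_assoc, inv_mul_cancel₀ hε, one_mul]
      calc (if d+2 ≤ k then ε^(d+1) else 0) * p ((m:ℤ)+2)
            + ε⁻¹ * (ε^(d+1+1) * ∑ j ∈ Finset.range (m+1),
                (if d+1+j+2 ≤ k then p ((m:ℤ)-(j:ℤ)+1) else 0))
          = ε^(d+1) * ((if d+2 ≤ k then p ((m:ℤ)+2) else 0)
            + ∑ j ∈ Finset.range (m+1), (if d+1+j+2 ≤ k then p ((m:ℤ)-(j:ℤ)+1) else 0)) := by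
            rw [← mul_assoc, e3]
            split_ifs <;> ring
        _ = ε^(d+1) * ((∑ j ∈ Finset.range (m+1),
                (if d+(j+1)+2 ≤ k then p (((m+1:ℕ):ℤ)-((j+1:ℕ):ℤ)+1) else 0))
            + (if d+0+2 ≤ k then p (((m+1:ℕ):ℤ)-((0:ℕ):ℤ)+1) else 0)) := by
            rw [e2, show d+0+2 = d+2 from by omega,
              add_comm ((if d+2 ≤ k then p ((m:ℤ)+2) else 0))]
            congr 2
            refine Finset.sum_congr rfl fun j _ => ?_
            rw [e1 j, show d+(j+1)+2 = d+1+j+2 from by omega]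
    refine ⟨?_, hQ⟩
    rw [permHM_succ k ε hk, ihP, ihQ 0]
    have e4 : ε⁻¹ * (ε^(0+1) * ∑ j ∈ Finset.range (m+1), (if 0+j+2 ≤ k then p ((m:ℤ)-(j:ℤ)+1) else 0))
        = ∑ j ∈ Finset.range (m+1), (if j+2 ≤ k then p ((m:ℤ)-(j:ℤ)+1) else 0) := by
      rw [← mul_assoc, pow_one, inv_mul_cancel₀ hε, one_mul]
      refine Finset.sum_congr rfl fun j _ => by rw [show 0+j+2 = j+2 from by omega]
    rw [e4, show ((m+1:ℕ):ℤ)+2 = (m:ℤ)+3 from by push_cast; ring]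
    exact (grec k hk p hpinit hpzero hprec m).symm

end pfacts

noncomputable def perH (m : ℕ) (a : ℕ → ℕ → ℂ) : ℂ :=
  ∑ σ : Equiv.Perm (Fin m), ∏ i : Fin m, a (i.1 + 1) ((σ i).1 + 1)

/-- Entry (r,s) (1-based) of the matrix `H_{k,n}`:
`i^{r-s} * t_{r-s+1} / t_2^{r-s}` if `-1 ≤ r-s < k`, and `0` otherwise. -/
noncomputable def hEntry (k : ℕ) (t : ℤ → ℂ) (r s : ℕ) : ℂ :=
  if -1 ≤ (r : ℤ) - s ∧ (r : ℤ) - s < k then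
    Complex.I ^ ((r : ℤ) - s) * t ((r : ℤ) - s + 1) / t 2 ^ ((r : ℤ) - s)
  else 0

/-- Entry (i,j) (1-based) of the matrix `L_{k,n}`:
`t_{i-j+1} / t_2^{i-j}` if `-1 ≤ i-j < k`, and `0` otherwise. -/
noncomputable def lEntry (k : ℕ) (t : ℤ → ℂ) (i j : ℕ) : ℂ :=
  if -1 ≤ (i : ℤ) - j ∧ (i : ℤ) - j < k then
    t ((i : ℤ) - j + 1) / t 2 ^ ((i : ℤ) - j)
  else 0

theorem perH_eq (m : ℕ) (a : ℕ → ℕ → ℂ) :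
    perH m a = (Matrix.of fun i j : Fin m => a (i.1+1) (j.1+1)).permanent := by
  rw [← Matrix.permanent_transpose, Matrix.permanent, perH]
  refine Finset.sum_congr rfl fun σ _ => Finset.prod_congr rfl fun i _ => rfl

section entries
variable (k : ℕ) (hk : 2 ≤ k) (t : ℤ → ℂ) (ht0 : t 0 = 1) (ht1 : t 1 = 2)
  (ht : ∀ j : ℤ, 2 ≤ j → j ≤ (k:ℤ) → t j = 1)

include hk ht0 ht1 ht

theorem tval (d : ℤ) (hd1 : -1 ≤ d) (hd2 : d < k) :
    t (d + 1) = if d = 0 then 2 else 1 := by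
  rcases eq_or_lt_of_le hd1 with h1 | h1
  · rw [← h1, show (-1:ℤ)+1 = 0 by ring, ht0, if_neg (by omega)]
  · rcases eq_or_ne d 0 with h2 | h2
    · rw [h2]
      norm_num [ht1]
    · rw [if_neg h2, ht (d+1) (by omega) (by omega)]

theorem hEntry_eq (r s : ℕ) : hEntry k t r s = eEnt k Complex.I r s := by
  rw [hEntry, eEnt]
  by_cases h : -1 ≤ (r:ℤ) - s ∧ (r:ℤ) - s < k
  · rw [if_pos h, if_pos h, ht 2 le_rfl (by exact_mod_cast hk), one_zpow, div_one]
    congr 1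
    exact tval k hk t ht0 ht1 ht _ h.1 h.2
  · rw [if_neg h, if_neg h]

theorem lEntry_eq (r s : ℕ) : lEntry k t r s = eEnt k 1 r s := by
  rw [lEntry, eEnt]
  by_cases h : -1 ≤ (r:ℤ) - s ∧ (r:ℤ) - s < k
  · rw [if_pos h, if_pos h, ht 2 le_rfl (by exact_mod_cast hk), one_zpow, div_one, one_mul]
    exact tval k hk t ht0 ht1 ht _ h.1 h.2
  · rw [if_neg h, if_neg h]

end entries

theorem per_HL_eq_kSOkP (k : ℕ) (hk : 2 ≤ k) (t : ℤ → ℂ) (ht0 : t 0 = 1) (ht1 : t 1 = 2)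
    (ht : ∀ j : ℤ, 2 ≤ j → j ≤ (k : ℤ) → t j = 1)
    (p : ℤ → ℂ) (hpinit : p (1 - (k : ℤ)) = 1)
    (hpzero : ∀ n : ℤ, 1 - (k : ℤ) < n → n ≤ 0 → p n = 0)
    (hprec : ∀ n : ℤ, 0 < n →
      p n = 2 * p (n - 1) + ∑ j ∈ Finset.Icc (2 : ℤ) (k : ℤ), p (n - j))
    (n : ℕ) (hn : 1 ≤ n) :
    perH n (hEntry k t) = p ((n : ℤ) + 1) ∧ perH n (lEntry k t) = p ((n : ℤ) + 1) := by
  obtain ⟨m, rfl⟩ : ∃ m, n = m+1 := ⟨n-1, by omega⟩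
  have hcast : (((m+1:ℕ)):ℤ) + 1 = (m:ℤ) + 2 := by push_cast; ring
  rw [hcast]
  constructor
  · rw [perH_eq]
    have hM : (Matrix.of fun i j : Fin (m+1) => hEntry k t (i.1+1) (j.1+1))
        = HM k Complex.I (m+1) := by
      ext i j
      simp only [Matrix.of_apply, HM]
      exact hEntry_eq k hk t ht0 ht1 ht _ _
    rw [hM]
    exact (solve k hk p hpinit hpzero hprec Complex.I Complex.I_ne_zero m).1
  · rw [perH_eq]
    have hM : (Matrix.of fun i j : Fin (m+1) => lEntry k t (i.1+1) (j.1+1))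
        = HM k 1 (m+1) := by
      ext i j
      simp only [Matrix.of_apply, HM]
      exact lEntry_eq k hk t ht0 ht1 ht _ _
    rw [hM]
    exact (solve k hk p hpinit hpzero hprec 1 one_ne_zero m).1
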